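/- arXiv:1410.7357 — 5 statements merged into one kernel-verified Lean document; each statement's English description precedes it below -/
import Mathlib

section
/- Let g be a finite simple graph on ordered vertices v_1, …, v_n and let s_1 ≤ … ≤ s_n be a nondecreasing sequence of nonnegative integers satisfying Condition 1, i.e., for all i ∈ [n]: (i) v_i has at least s_i neighbors v_j with s_j ≥ s_i, and (ii) v_i has at most s_i neighbors v_j with j > i. Then the shell index of each vertex satisfies s(v_i) = s_i for all i ∈ [n]. -/
/-- `MinDegGE G k S`: the subgraph of `G` induced on the vertex set `S` has minimum
degree at least `k`, i.e. every vertex of `S` has at least `k` neighbors inside `S`. -/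
def MinDegGE {V : Type*} (G : SimpleGraph V) (k : ℕ) (S : Set V) : Prop :=
  ∀ v ∈ S, k ≤ Nat.card {w : V // G.Adj v w ∧ w ∈ S}

/-- The vertex set of the `k`-core of `G`: the union of all vertex subsets inducing a
subgraph of minimum degree at least `k`. -/
def coreVerts {V : Type*} (G : SimpleGraph V) (k : ℕ) : Set V :=
  {v | ∃ S : Set V, MinDegGE G k S ∧ v ∈ S}

/-- The shell index of `v`: the largest `k` such that `v` belongs to the `k`-core. -/
noncomputable def shellIndex {V : Type*} (G : SimpleGraph V) (v : V) : ℕ :=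
  sSup {k : ℕ | v ∈ coreVerts G k}

/-- `n_j(g)`: the number of vertices of `G` with shell index `j`. -/
noncomputable def shellCount {V : Type*} (G : SimpleGraph V) (j : ℕ) : ℕ :=
  Nat.card {v : V // shellIndex G v = j}

private lemma nat_card_subtype_mono {α : Type*} [Finite α] {p q : α → Prop}
    (h : ∀ a, p a → q a) : Nat.card {a // p a} ≤ Nat.card {a // q a} :=
  Nat.card_le_card_of_injective (fun x => ⟨x.1, h x.1 x.2⟩) (by
    intro a b hab
    apply Subtype.ext
    simpa using hab)

/-- If `g` is a graph on ordered vertices `v_1, …, v_n` and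
`s_1 ≤ … ≤ s_n` is a nondecreasing sequence of nonnegative integers satisfying
Condition 1 — (i) each `v_i` has at least `s_i` neighbors `v_j` with `s_j ≥ s_i`, and
(ii) each `v_i` has at most `s_i` neighbors `v_j` with `j > i` — then the shell index
of each vertex `v_i` equals `s_i`. -/
theorem shellIndex_eq_of_condition_one {n : ℕ} (G : SimpleGraph (Fin n))
    (s : Fin n → ℕ) (hmono : Monotone s)
    (h1 : ∀ i : Fin n, s i ≤ Nat.card {j : Fin n // G.Adj i j ∧ s i ≤ s j})
    (h2 : ∀ i : Fin n, Nat.card {j : Fin n // G.Adj i j ∧ i < j} ≤ s i) :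
    ∀ i : Fin n, shellIndex G i = s i := by
  intro i
  -- membership: s i belongs to the set
  have hmem : i ∈ coreVerts G (s i) := by
    refine ⟨{j | s i ≤ s j}, ?_, le_refl (s i)⟩
    intro v hv
    have hsub : {j : Fin n | G.Adj v j ∧ s v ≤ s j} ⊆
        {j : Fin n | G.Adj v j ∧ j ∈ {j | s i ≤ s j}} := by
      rintro w ⟨ha, hw⟩
      exact ⟨ha, le_trans hv hw⟩
    calc s i ≤ s v := hv
      _ ≤ Nat.card {j : Fin n // G.Adj v j ∧ s v ≤ s j} := h1 v
      _ ≤ Nat.card {w : Fin n // G.Adj v w ∧ w ∈ {j | s i ≤ s j}} :=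
          nat_card_subtype_mono (fun w hw => hsub hw)
  -- upper bound
  have hub : ∀ k ∈ {k : ℕ | i ∈ coreVerts G k}, k ≤ s i := by
    intro k hk
    obtain ⟨S, hS, hiS⟩ := hk
    have hfin : S.Finite := Set.toFinite S
    have hne : hfin.toFinset.Nonempty := ⟨i, hfin.mem_toFinset.mpr hiS⟩
    set m := hfin.toFinset.min' hne with hm
    have hmS : m ∈ S := hfin.mem_toFinset.mp (hfin.toFinset.min'_mem hne)
    have hmin : ∀ w ∈ S, m ≤ w := fun w hw =>
      hfin.toFinset.min'_le w (hfin.mem_toFinset.mpr hw)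
    have hsub : {w : Fin n | G.Adj m w ∧ w ∈ S} ⊆ {w : Fin n | G.Adj m w ∧ m < w} := by
      rintro w ⟨ha, hw⟩
      exact ⟨ha, lt_of_le_of_ne (hmin w hw) (G.ne_of_adj ha)⟩
    calc k ≤ Nat.card {w : Fin n // G.Adj m w ∧ w ∈ S} := hS m hmS
      _ ≤ Nat.card {w : Fin n // G.Adj m w ∧ m < w} :=
          nat_card_subtype_mono (fun w hw => hsub hw)
      _ ≤ s m := h2 m
      _ ≤ s i := hmono (hmin i hiS)
  refine le_antisymm (csSup_le ⟨s i, hmem⟩ hub) (le_csSup ⟨s i, hub⟩ hmem)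
end

section
/- Let g be a finite simple graph on ordered vertices v_1, …, v_n, let s_1 ≤ … ≤ s_n be a nondecreasing sequence of nonnegative integers, and suppose that condition (ii) holds: for all i ∈ [n], v_i has at most s_i neighbors v_j with j > i. Then condition (i) (for all i ∈ [n], v_i has at least s_i neighbors v_j with s_j ≥ s_i) holds if and only if the shell index of each vertex satisfies s(v_i) = s_i for all i ∈ [n]. -/
private lemma key_bound {n : ℕ} (G : SimpleGraph (Fin n)) (s : Fin n → ℕ)
    (hmono : Monotone s)
    (h2 : ∀ i : Fin n, Nat.card {j : Fin n // G.Adj i j ∧ i < j} ≤ s i)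
    {v : Fin n} {k : ℕ} (hv : v ∈ coreVerts G k) : k ≤ s v := by
  obtain ⟨S, hS, hvS⟩ := hv
  obtain ⟨m, hmS, hmin⟩ := Set.exists_min_image S id (Set.toFinite S) ⟨v, hvS⟩
  have h1 : k ≤ Nat.card {w : Fin n // G.Adj m w ∧ w ∈ S} := hS m hmS
  have h3 : Nat.card {w : Fin n // G.Adj m w ∧ w ∈ S}
      ≤ Nat.card {j : Fin n // G.Adj m j ∧ m < j} := by
    have hsub : {w : Fin n | G.Adj m w ∧ w ∈ S} ⊆ {j : Fin n | G.Adj m j ∧ m < j} := by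
      rintro w ⟨hadj, hwS⟩
      exact ⟨hadj, lt_of_le_of_ne (hmin w hwS) (fun h => G.irrefl (h ▸ hadj))⟩
    exact Set.ncard_le_ncard hsub (Set.toFinite _)
  calc k ≤ _ := h1
    _ ≤ _ := h3
    _ ≤ s m := h2 m
    _ ≤ s v := hmono (hmin v hvS)

/-- If `g` is a graph on ordered vertices `v_1, …, v_n`,
`s_1 ≤ … ≤ s_n` is nondecreasing, and condition (ii) holds (each `v_i` has at most
`s_i` neighbors `v_j` with `j > i`), then condition (i) (each `v_i` has at least `s_i`
neighbors `v_j` with `s_j ≥ s_i`) holds if and only if the shell index of each `v_i`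
equals `s_i`. -/
theorem condition_one_iff_shellIndex_eq {n : ℕ} (G : SimpleGraph (Fin n))
    (s : Fin n → ℕ) (hmono : Monotone s)
    (h2 : ∀ i : Fin n, Nat.card {j : Fin n // G.Adj i j ∧ i < j} ≤ s i) :
    (∀ i : Fin n, s i ≤ Nat.card {j : Fin n // G.Adj i j ∧ s i ≤ s j}) ↔
      (∀ i : Fin n, shellIndex G i = s i) := by
  have hbdd : ∀ v : Fin n, BddAbove {k : ℕ | v ∈ coreVerts G k} :=
    fun v => ⟨s v, fun k hk => key_bound G s hmono h2 hk⟩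
  have h0 : ∀ v : Fin n, 0 ∈ {k : ℕ | v ∈ coreVerts G k} :=
    fun v => ⟨{v}, fun w _ => Nat.zero_le _, rfl⟩
  constructor
  · intro h1 i
    apply le_antisymm
    · exact csSup_le ⟨0, h0 i⟩ (fun k hk => key_bound G s hmono h2 hk)
    · apply le_csSup (hbdd i)
      refine ⟨{j | s i ≤ s j}, ?_, le_refl (s i)⟩
      intro v hv
      calc s i ≤ s v := hv
        _ ≤ Nat.card {w : Fin n // G.Adj v w ∧ s v ≤ s w} := h1 v
        _ ≤ Nat.card {w : Fin n // G.Adj v w ∧ w ∈ {j : Fin n | s i ≤ s j}} := by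
            apply Set.ncard_le_ncard ?_ (Set.toFinite _)
            rintro w ⟨hadj, hw⟩
            exact ⟨hadj, le_trans hv hw⟩
  · intro hsh i
    have hmem : s i ∈ {k : ℕ | i ∈ coreVerts G k} := by
      rw [← hsh i]
      exact Nat.sSup_mem ⟨0, h0 i⟩ (hbdd i)
    obtain ⟨S, hS, hiS⟩ := hmem
    calc s i ≤ Nat.card {w : Fin n // G.Adj i w ∧ w ∈ S} := hS i hiS
      _ ≤ Nat.card {j : Fin n // G.Adj i j ∧ s i ≤ s j} := by
          apply Set.ncard_le_ncard ?_ (Set.toFinite _)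
          rintro w ⟨hadj, hwS⟩
          refine ⟨hadj, ?_⟩
          rw [← hsh w]
          exact le_csSup (hbdd w) ⟨S, hS, hwS⟩
end

section
/- Let n ≥ 1 and let (n_0, n_1, …, n_{n-1}) be a vector of nonnegative integers with Σ_{j=0}^{n-1} n_j = n. Let m be the largest index j with n_j > 0, and suppose n_m ≥ m + 1. Then there exists a simple graph g on n vertices whose shell distribution is exactly (n_0, n_1, …, n_{n-1}), i.e., for every j, the number of vertices of g with shell index j equals n_j. -/
set_option maxHeartbeats 1000000

open Finset

section Aux
variable {n : ℕ}

lemma nat_card_mono {p q : Fin n → Prop} (h : ∀ w, p w → q w) :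
    Nat.card {w : Fin n // p w} ≤ Nat.card {w : Fin n // q w} := by
  classical
  rw [Nat.card_eq_fintype_card, Nat.card_eq_fintype_card]
  exact Fintype.card_subtype_mono p q h

lemma card_band (a b : ℕ) (hb : b ≤ n) :
    Nat.card {w : Fin n // a ≤ w.val ∧ w.val < b} = b - a := by
  have e : {w : Fin n // a ≤ w.val ∧ w.val < b} ≃ Fin (b - a) :=
    { toFun := fun w => ⟨w.1.val - a, by omega⟩
      invFun := fun k => ⟨⟨a + k.val, by omega⟩, by constructor <;> simp <;> omega⟩
      left_inv := fun w => by ext; simp; omega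
      right_inv := fun k => by ext; simp }
  rw [Nat.card_congr e]
  simp

lemma card_tail (t : ℕ) : Nat.card {w : Fin n // t ≤ w.val} = n - t := by
  rw [Nat.card_congr (Equiv.subtypeEquivRight (q := fun w : Fin n => t ≤ w.val ∧ w.val < n)
    (fun w => by simp [w.isLt]))]
  exact card_band t n le_rfl

lemma card_tail_ne (t : ℕ) (u : Fin n) (hu : t ≤ u.val) :
    Nat.card {w : Fin n // t ≤ w.val ∧ w ≠ u} = n - t - 1 := by
  classical
  rw [Nat.card_eq_fintype_card, Fintype.card_subtype]
  have h1 : univ.filter (fun w : Fin n => t ≤ w.val ∧ w ≠ u)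
      = (univ.filter (fun w : Fin n => t ≤ w.val)).erase u := by
    ext w; simp [Finset.mem_erase, and_comm]
  rw [h1, Finset.card_erase_of_mem (by simp [hu])]
  have h2 : (univ.filter (fun w : Fin n => t ≤ w.val)).card = n - t := by
    rw [← Fintype.card_subtype, ← Nat.card_eq_fintype_card]
    exact card_tail t
  rw [h2]

def Npart (c : Fin n → ℕ) (j : ℕ) : ℕ := ∑ j' ∈ univ.filter (fun j' : Fin n => j'.val < j), c j'

noncomputable def sig (c : Fin n → ℕ) (v : Fin n) : ℕ := sInf {j | v.val < Npart c (j + 1)}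

lemma Npart_mono (c : Fin n → ℕ) : Monotone (Npart c) := by
  intro a b hab
  apply Finset.sum_le_sum_of_subset
  intro x; simp only [mem_filter, mem_univ, true_and]; omega

lemma Npart_step (c : Fin n → ℕ) (j : ℕ) (hj : j < n) :
    Npart c (j + 1) = Npart c j + c ⟨j, hj⟩ := by
  have : univ.filter (fun j' : Fin n => j'.val < j + 1)
      = insert ⟨j, hj⟩ (univ.filter (fun j' : Fin n => j'.val < j)) := by
    ext x
    simp only [mem_filter, mem_univ, true_and, mem_insert, Fin.ext_iff]
    omega
  rw [Npart, this, Finset.sum_insert (by simp), Npart, add_comm]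

lemma Npart_top (c : Fin n → ℕ) (hsum : ∑ j, c j = n) : Npart c n = n := by
  rw [Npart]
  have h : univ.filter (fun j' : Fin n => j'.val < n) = univ := by
    ext x; simp [x.isLt]
  rw [h, hsum]

lemma sig_spec (hn : 1 ≤ n) (c : Fin n → ℕ) (hsum : ∑ j, c j = n) (v : Fin n) :
    Npart c (sig c v) ≤ v.val ∧ v.val < Npart c (sig c v + 1) := by
  have hne : ∃ j, v.val < Npart c (j + 1) := by
    refine ⟨n - 1, ?_⟩
    have : n - 1 + 1 = n := by omega
    rw [this, Npart_top c hsum]; exact v.isLt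
  have hmem : sig c v ∈ {j | v.val < Npart c (j + 1)} := Nat.sInf_mem hne
  refine ⟨?_, hmem⟩
  by_contra h
  push_neg at h
  rcases Nat.eq_zero_or_pos (sig c v) with h0 | h0
  · rw [h0] at h; simp [Npart] at h
  · have : sig c v - 1 ∈ {j | v.val < Npart c (j + 1)} := by
      simp only [Set.mem_setOf_eq]
      have : sig c v - 1 + 1 = sig c v := by omega
      rw [this]; exact h
    have h2 : sig c v ≤ sig c v - 1 := Nat.sInf_le this
    omega

lemma sig_eq_iff (hn : 1 ≤ n) (c : Fin n → ℕ) (hsum : ∑ j, c j = n) (v : Fin n) (j : ℕ) :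
    sig c v = j ↔ Npart c j ≤ v.val ∧ v.val < Npart c (j + 1) := by
  constructor
  · rintro rfl; exact sig_spec hn c hsum v
  · rintro ⟨h1, h2⟩
    have hle : sig c v ≤ j := Nat.sInf_le h2
    have hspec := sig_spec hn c hsum v
    by_contra hne
    have : sig c v + 1 ≤ j := by omega
    have := Npart_mono c this
    omega

end Aux

/-- Let `n ≥ 1` and let `(n_0, …, n_{n-1})` be nonnegative integers
summing to `n`. If `m` is the largest index with `n_m > 0` and `n_m ≥ m + 1`, then
there is a simple graph on `n` vertices whose shell distribution is exactly
`(n_0, …, n_{n-1})`. -/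
theorem shell_distribution_realizable {n : ℕ} (hn : 1 ≤ n) (c : Fin n → ℕ)
    (hsum : ∑ j, c j = n) (m : Fin n) (hm : IsGreatest {j : Fin n | 0 < c j} m)
    (hcm : (m : ℕ) + 1 ≤ c m) :
    ∃ G : SimpleGraph (Fin n), ∀ j : Fin n, shellCount G (j : ℕ) = c j := by
  classical
  set t := n - (m.val + 1) with ht
  have hmlt : m.val < n := m.isLt
  -- c vanishes above m
  have hczero : ∀ j : Fin n, m < j → c j = 0 := by
    intro j hj
    by_contra h
    have hmem : j ∈ {j : Fin n | 0 < c j} := Nat.pos_of_ne_zero h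
    exact absurd (hm.2 hmem) (not_le.mpr hj)
  have hNm1 : Npart c (m.val + 1) = n := by
    have h1 : Npart c n = n := Npart_top c hsum
    have h2 : Npart c (m.val + 1) = Npart c n := by
      rw [Npart, Npart]
      apply Finset.sum_subset
      · intro x; simp only [mem_filter, mem_univ, true_and]
        intro hx; exact x.isLt
      · intro x _ hx
        simp only [mem_filter, mem_univ, true_and, not_lt] at hx
        exact hczero x (by rw [Fin.lt_def]; omega)
    omega
  have hNm : Npart c m.val = n - c m := by
    have := Npart_step c m.val hmlt
    simp only [Fin.eta] at this
    omega
  have hsig_le : ∀ v : Fin n, sig c v ≤ m.val := by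
    intro v
    apply Nat.sInf_le
    simp only [Set.mem_setOf_eq, hNm1]
    exact v.isLt
  have hsig_top : ∀ v : Fin n, t ≤ v.val → sig c v = m.val := by
    intro v hv
    rw [sig_eq_iff hn c hsum]
    refine ⟨?_, by rw [hNm1]; exact v.isLt⟩
    rw [hNm]
    omega
  -- the graph
  set G : SimpleGraph (Fin n) :=
    { Adj := fun i j => i ≠ j ∧ ((t ≤ i.val ∧ t ≤ j.val) ∨ (t ≤ i.val ∧ i.val - t < sig c j)
        ∨ (t ≤ j.val ∧ j.val - t < sig c i))
      symm := ⟨by rintro i j ⟨h1, h2⟩; exact ⟨h1.symm, by tauto⟩⟩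
      loopless := ⟨fun i h => h.1 rfl⟩ } with hGdef
  have hAdj : ∀ i j : Fin n, G.Adj i j ↔ i ≠ j ∧ ((t ≤ i.val ∧ t ≤ j.val)
      ∨ (t ≤ i.val ∧ i.val - t < sig c j) ∨ (t ≤ j.val ∧ j.val - t < sig c i)) := by
    intro i j; rw [hGdef]
  -- lower bound on shell index
  have hA : ∀ v : Fin n, v ∈ coreVerts G (sig c v) := by
    intro v
    refine ⟨{w : Fin n | t ≤ w.val} ∪ {v}, ?_, Or.inr rfl⟩
    intro u hu
    by_cases hut : t ≤ u.val
    · -- clique vertex: at least n - t - 1 = m neighbors in S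
      have hsub : ∀ w : Fin n, (t ≤ w.val ∧ w ≠ u) →
          (G.Adj u w ∧ w ∈ ({w : Fin n | t ≤ w.val} ∪ {v} : Set (Fin n))) := by
        intro w ⟨hw1, hw2⟩
        exact ⟨(hAdj u w).mpr ⟨hw2.symm, Or.inl ⟨hut, hw1⟩⟩, Or.inl hw1⟩
      calc sig c v ≤ m.val := hsig_le v
        _ = n - t - 1 := by omega
        _ = Nat.card {w : Fin n // t ≤ w.val ∧ w ≠ u} := (card_tail_ne t u hut).symm
        _ ≤ _ := nat_card_mono hsub
    · -- u = v, non-clique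
      have huv : u = v := by
        rcases hu with h | h
        · exact absurd h hut
        · exact h
      subst huv
      have hsub : ∀ w : Fin n, (t ≤ w.val ∧ w.val < t + sig c u) →
          (G.Adj u w ∧ w ∈ ({w : Fin n | t ≤ w.val} ∪ {u} : Set (Fin n))) := by
        intro w ⟨hw1, hw2⟩
        have hne : u ≠ w := by
          intro h; rw [h] at hut; exact hut hw1
        exact ⟨(hAdj u w).mpr ⟨hne, Or.inr (Or.inr ⟨hw1, by omega⟩)⟩, Or.inl hw1⟩
      have hband : Nat.card {w : Fin n // t ≤ w.val ∧ w.val < t + sig c u} = sig c u := by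
        rw [card_band t (t + sig c u) (by have := hsig_le u; omega)]
        omega
      calc sig c u = Nat.card {w : Fin n // t ≤ w.val ∧ w.val < t + sig c u} := hband.symm
        _ ≤ _ := nat_card_mono hsub
  -- upper bound on shell index
  have hB : ∀ (v : Fin n) (k : ℕ), v ∈ coreVerts G k → k ≤ sig c v := by
    rintro v k ⟨S, hS, hvS⟩
    have hlow : ∀ u ∈ S, u.val < t → k ≤ sig c u := by
      intro u huS hut
      have h1 := hS u huS
      have hsub : ∀ w : Fin n, (G.Adj u w ∧ w ∈ S) → (t ≤ w.val ∧ w.val < t + sig c u) := by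
        intro w ⟨hadj, _⟩
        rw [hAdj] at hadj
        obtain ⟨-, h | h | h⟩ := hadj
        · omega
        · omega
        · exact ⟨h.1, by omega⟩
      have h2 := nat_card_mono hsub
      have h3 : Nat.card {w : Fin n // t ≤ w.val ∧ w.val < t + sig c u} = sig c u := by
        rw [card_band t (t + sig c u) (by have := hsig_le u; omega)]
        omega
      omega
    by_cases hvt : v.val < t
    · exact hlow v hvS hvt
    · push_neg at hvt
      rw [hsig_top v hvt]
      by_cases hall : ∀ u ∈ S, t ≤ u.val
      · -- S inside the clique
        have h1 := hS v hvS
        have hsub : ∀ w : Fin n, (G.Adj v w ∧ w ∈ S) → (t ≤ w.val ∧ w ≠ v) := by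
          intro w ⟨hadj, hwS⟩
          exact ⟨hall w hwS, fun h => ((hAdj v w).mp hadj).1 h.symm⟩
        have h2 := nat_card_mono hsub
        rw [card_tail_ne t v hvt] at h2
        omega
      · push_neg at hall
        obtain ⟨u, huS, hut⟩ := hall
        have := hlow u huS (by omega)
        have := hsig_le u
        omega
  -- shellIndex = sig
  have key : ∀ v : Fin n, shellIndex G v = sig c v := by
    intro v
    have h0 : (0 : ℕ) ∈ {k : ℕ | v ∈ coreVerts G k} :=
      ⟨Set.univ, fun u _ => Nat.zero_le _, trivial⟩
    apply le_antisymm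
    · exact csSup_le ⟨0, h0⟩ (fun k hk => hB v k hk)
    · exact le_csSup ⟨sig c v, fun k hk => hB v k hk⟩ (hA v)
  refine ⟨G, fun j => ?_⟩
  have : shellCount G (j : ℕ) = Nat.card {v : Fin n // sig c v = j.val} := by
    unfold shellCount
    apply Nat.card_congr
    exact Equiv.subtypeEquivRight (fun v => by rw [key v])
  rw [this]
  rw [Nat.card_congr (Equiv.subtypeEquivRight
    (fun v => sig_eq_iff hn c hsum v j.val))]
  have hle : Npart c (j.val + 1) ≤ n := by
    have := Npart_mono c (Nat.succ_le_of_lt j.isLt)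
    rwa [Npart_top c hsum] at this
  rw [card_band (Npart c j.val) (Npart c (j.val + 1)) hle]
  rw [Npart_step c j.val j.isLt]
  simp
end

section
/- Let n ≥ 1. A vector (n_0, n_1, …, n_{n-1}) of nonnegative integers with Σ_{j=0}^{n-1} n_j = n is the shell distribution of some simple graph on n vertices if and only if n_m ≥ m + 1, where m is the largest index j with n_j > 0. -/
section helpers
variable {V : Type*} [Fintype V] (G : SimpleGraph V)
set_option linter.unusedSectionVars false

lemma zero_mem_shellSet (v : V) : v ∈ coreVerts G 0 :=
  ⟨Set.univ, fun _ _ => Nat.zero_le _, Set.mem_univ v⟩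

lemma core_le_nbrs {v : V} {k : ℕ} (h : v ∈ coreVerts G k) :
    k ≤ Nat.card {w : V // G.Adj v w} := by
  obtain ⟨S, hS, hv⟩ := h
  refine (hS v hv).trans (Nat.card_le_card_of_injective
    (fun x => ⟨x.1, x.2.1⟩) ?_)
  intro a b hab
  simpa [Subtype.ext_iff] using hab

lemma shellSet_bddAbove (v : V) : BddAbove {k : ℕ | v ∈ coreVerts G k} := by
  refine ⟨Nat.card {w : V // G.Adj v w}, fun k hk => core_le_nbrs G hk⟩

lemma shellIndex_mem (v : V) : v ∈ coreVerts G (shellIndex G v) :=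
  Nat.sSup_mem ⟨0, zero_mem_shellSet G v⟩ (shellSet_bddAbove G v)

lemma le_shellIndex {v : V} {k : ℕ} (h : v ∈ coreVerts G k) : k ≤ shellIndex G v :=
  le_csSup (shellSet_bddAbove G v) h

lemma shellIndex_le {v : V} {K : ℕ} (h : ∀ k, v ∈ coreVerts G k → k ≤ K) :
    shellIndex G v ≤ K :=
  csSup_le ⟨0, zero_mem_shellSet G v⟩ h

lemma shellIndex_le_nbrs (v : V) : shellIndex G v ≤ Nat.card {w : V // G.Adj v w} :=
  shellIndex_le G fun _ hk => core_le_nbrs G hk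

lemma shellIndex_lt_card (v : V) : shellIndex G v < Fintype.card V := by
  classical
  refine (shellIndex_le_nbrs G v).trans_lt ?_
  rw [Nat.card_eq_fintype_card]
  exact Fintype.card_subtype_lt (x := v) (G.irrefl)

end helpers

section transfer
variable {W V : Type*} (e : W ≃ V) (G : SimpleGraph V)

lemma card_nbrs_comap (v : W) (S : Set W) :
    Nat.card {w : W // (G.comap e).Adj v w ∧ w ∈ S} =
      Nat.card {x : V // G.Adj (e v) x ∧ x ∈ e '' S} :=
  Nat.card_congr (e.subtypeEquiv fun w =>
    and_congr Iff.rfl (e.injective.mem_set_image).symm)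

lemma minDegGE_comap {k : ℕ} {S : Set W} :
    MinDegGE (G.comap e) k S ↔ MinDegGE G k (e '' S) := by
  constructor
  · rintro h u ⟨v, hv, rfl⟩
    exact (h v hv).trans (card_nbrs_comap e G v S).le
  · intro h v hv
    rw [card_nbrs_comap e G v S]
    exact h (e v) (Set.mem_image_of_mem e hv)

lemma coreVerts_comap {k : ℕ} {w : W} :
    w ∈ coreVerts (G.comap e) k ↔ e w ∈ coreVerts G k := by
  constructor
  · rintro ⟨S, hS, hw⟩
    exact ⟨e '' S, (minDegGE_comap e G).1 hS, Set.mem_image_of_mem e hw⟩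
  · rintro ⟨T, hT, hw⟩
    refine ⟨e ⁻¹' T, ?_, hw⟩
    rw [minDegGE_comap e G, Set.image_preimage_eq T e.surjective]
    exact hT

lemma shellIndex_comap (w : W) :
    shellIndex (G.comap e) w = shellIndex G (e w) := by
  unfold shellIndex
  congr 1
  ext k
  exact coreVerts_comap e G

lemma shellCount_comap (j : ℕ) :
    shellCount (G.comap e) j = shellCount G j :=
  Nat.card_congr (e.subtypeEquiv fun w => by rw [shellIndex_comap])

end transfer

namespace ShellC
variable {n : ℕ} (c : Fin n → ℕ) (m : Fin n)

def isCl (v : Σ j : Fin n, Fin (c j)) : Prop := v.1 = m ∧ (v.2 : ℕ) ≤ (m : ℕ)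

def posv (v : Σ j : Fin n, Fin (c j)) : ℕ := (v.2 : ℕ)

def Gc : SimpleGraph (Σ j : Fin n, Fin (c j)) where
  Adj u v := u ≠ v ∧ (isCl c m u ∧ isCl c m v ∨
    isCl c m u ∧ ¬ isCl c m v ∧ (u.2 : ℕ) < (v.1 : ℕ) ∨
    isCl c m v ∧ ¬ isCl c m u ∧ (v.2 : ℕ) < (u.1 : ℕ))
  symm := by
    constructor
    rintro u v ⟨hne, h⟩
    exact ⟨hne.symm, by tauto⟩
  loopless := ⟨fun v h => h.1 rfl⟩

lemma cl_ext {u u' : Σ j : Fin n, Fin (c j)} (hu : isCl c m u) (hu' : isCl c m u')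
    (h : posv c u = posv c u') : u = u' := by
  obtain ⟨j, i⟩ := u
  obtain ⟨j', i'⟩ := u'
  obtain ⟨rfl, -⟩ := hu
  obtain ⟨rfl, -⟩ := hu'
  simp only [posv] at h
  simp [Fin.ext_iff, h]

variable (hcm : (m : ℕ) + 1 ≤ c m)

def clV (i : ℕ) (hi : i ≤ (m : ℕ)) : Σ j : Fin n, Fin (c j) :=
  ⟨m, ⟨i, by omega⟩⟩

include hcm

lemma clV_isCl (i : ℕ) (hi : i ≤ (m : ℕ)) : isCl c m (clV c m hcm i hi) := ⟨rfl, hi⟩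

lemma clV_posv (i : ℕ) (hi : i ≤ (m : ℕ)) : posv c (clV c m hcm i hi) = i := rfl

omit hcm

lemma adj_of_isCl_ne {u w : Σ j : Fin n, Fin (c j)} (hu : isCl c m u) (hw : isCl c m w)
    (hne : u ≠ w) : (Gc c m).Adj u w := ⟨hne, Or.inl ⟨hu, hw⟩⟩

lemma adj_noncl {v w : Σ j : Fin n, Fin (c j)} (hv : ¬ isCl c m v) :
    (Gc c m).Adj v w ↔ isCl c m w ∧ posv c w < (v.1 : ℕ) := by
  constructor
  · rintro ⟨hne, h⟩
    rcases h with ⟨h1, -⟩ | ⟨h1, -⟩ | ⟨h1, -, h3⟩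
    · exact absurd h1 hv
    · exact absurd h1 hv
    · exact ⟨h1, h3⟩
  · rintro ⟨hw, hlt⟩
    refine ⟨fun h => hv (h ▸ hw), Or.inr (Or.inr ⟨hw, hv, hlt⟩)⟩

variable (hmax : ∀ j : Fin n, 0 < c j → j ≤ m)

include hmax in
lemma label_le (v : Σ j : Fin n, Fin (c j)) : (v.1 : ℕ) ≤ (m : ℕ) :=
  hmax v.1 v.2.pos

include hcm in
lemma clique_deg {u : Σ j : Fin n, Fin (c j)} (hu : isCl c m u) (S : Set _)
    (hS : ∀ w, isCl c m w → w ∈ S) :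
    (m : ℕ) ≤ Nat.card {w // (Gc c m).Adj u w ∧ w ∈ S} := by
  classical
  have hpos : posv c u ≤ (m : ℕ) := hu.2
  have hgle : ∀ k : Fin (m : ℕ),
      (if (k : ℕ) < posv c u then (k : ℕ) else (k : ℕ) + 1) ≤ (m : ℕ) := by
    intro k; have := k.2; split_ifs <;> omega
  have hgne : ∀ k : Fin (m : ℕ),
      (if (k : ℕ) < posv c u then (k : ℕ) else (k : ℕ) + 1) ≠ posv c u := by
    intro k; split_ifs <;> omega
  refine le_trans (by simp) (Nat.card_le_card_of_injective
    (fun k : Fin (m : ℕ) =>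
      (⟨clV c m hcm (if (k : ℕ) < posv c u then (k : ℕ) else (k : ℕ) + 1) (hgle k),
        adj_of_isCl_ne c m hu (clV_isCl c m hcm _ _)
          (fun h => hgne k (by
            have h2 := congrArg (posv c) h
            rw [clV_posv] at h2
            omega)),
        hS _ (clV_isCl c m hcm _ _)⟩ : {w // (Gc c m).Adj u w ∧ w ∈ S})) ?_)
  intro a b hab
  have h1 := congrArg (fun x : {w // (Gc c m).Adj u w ∧ w ∈ S} => posv c x.1) hab
  simp only [clV_posv] at h1
  have := a.2; have := b.2
  ext
  split_ifs at h1 <;> omega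

include hcm hmax in
lemma noncl_deg {v : Σ j : Fin n, Fin (c j)} (hv : ¬ isCl c m v) (S : Set _)
    (hS : ∀ w, isCl c m w → w ∈ S) :
    (v.1 : ℕ) ≤ Nat.card {w // (Gc c m).Adj v w ∧ w ∈ S} := by
  classical
  have hlab : (v.1 : ℕ) ≤ (m : ℕ) := label_le c m hmax v
  refine le_trans (by simp) (Nat.card_le_card_of_injective
    (fun k : Fin (v.1 : ℕ) =>
      (⟨clV c m hcm (k : ℕ) (le_trans (le_of_lt k.2) hlab),
        (adj_noncl c m hv).2 ⟨clV_isCl c m hcm _ _, by rw [clV_posv]; exact k.2⟩,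
        hS _ (clV_isCl c m hcm _ _)⟩ : {w // (Gc c m).Adj v w ∧ w ∈ S})) ?_)
  intro a b hab
  have h1 := congrArg (fun x : {w // (Gc c m).Adj v w ∧ w ∈ S} => posv c x.1) hab
  simp only [clV_posv] at h1
  exact Fin.ext h1

lemma noncl_nbrs_ub {v : Σ j : Fin n, Fin (c j)} (hv : ¬ isCl c m v) :
    Nat.card {w // (Gc c m).Adj v w} ≤ (v.1 : ℕ) := by
  classical
  refine le_trans (Nat.card_le_card_of_injective
    (fun x : {w // (Gc c m).Adj v w} =>
      (⟨posv c x.1, ((adj_noncl c m hv).1 x.2).2⟩ : Fin (v.1 : ℕ))) ?_) (by simp)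
  intro a b hab
  have h1 : posv c a.1 = posv c b.1 := congrArg Fin.val hab
  exact Subtype.ext (cl_ext c m ((adj_noncl c m hv).1 a.2).1
    ((adj_noncl c m hv).1 b.2).1 h1)

end ShellC
namespace ShellC
variable {n : ℕ} (c : Fin n → ℕ) (m : Fin n)
variable (hcm : (m : ℕ) + 1 ≤ c m) (hmax : ∀ j : Fin n, 0 < c j → j ≤ m)

include hmax in
lemma shell_le_m (v : Σ j : Fin n, Fin (c j)) :
    shellIndex (Gc c m) v ≤ (m : ℕ) := by
  classical
  by_cases hv : isCl c m v
  · apply shellIndex_le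
    intro k hk
    by_contra hk'
    push_neg at hk'
    obtain ⟨S, hS, hvS⟩ := hk
    have hScl : ∀ w ∈ S, isCl c m w := by
      intro w hw
      by_contra hw'
      have h1 := hS w hw
      have h2 : Nat.card {x // (Gc c m).Adj w x ∧ x ∈ S} ≤
          Nat.card {x // (Gc c m).Adj w x} :=
        Nat.card_le_card_of_injective (fun x => ⟨x.1, x.2.1⟩)
          (fun a b hab => by simpa [Subtype.ext_iff] using hab)
      have h3 := noncl_nbrs_ub c m hw'
      have h4 := label_le c m hmax w
      omega
    have hb : Nat.card {x // (Gc c m).Adj v x ∧ x ∈ S} ≤ (m : ℕ) := by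
      refine le_trans (Nat.card_le_card_of_injective
        (fun x : {x // (Gc c m).Adj v x ∧ x ∈ S} =>
          (⟨if posv c x.1 < posv c v then posv c x.1 else posv c x.1 - 1, by
            have hx : isCl c m x.1 := hScl x.1 x.2.2
            have h5 : posv c x.1 ≤ (m : ℕ) := hx.2
            have h6 : posv c v ≤ (m : ℕ) := hv.2
            have h7 : posv c x.1 ≠ posv c v := fun h =>
              (Gc c m).ne_of_adj x.2.1 (cl_ext c m hv hx h.symm)
            split_ifs <;> omega⟩ : Fin (m : ℕ))) ?_) (by simp)
      intro a b hab
      have ha : isCl c m a.1 := hScl a.1 a.2.2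
      have hb' : isCl c m b.1 := hScl b.1 b.2.2
      have h7a : posv c a.1 ≠ posv c v := fun h =>
        (Gc c m).ne_of_adj a.2.1 (cl_ext c m hv ha h.symm)
      have h7b : posv c b.1 ≠ posv c v := fun h =>
        (Gc c m).ne_of_adj b.2.1 (cl_ext c m hv hb' h.symm)
      have h1 : (if posv c a.1 < posv c v then posv c a.1 else posv c a.1 - 1)
          = (if posv c b.1 < posv c v then posv c b.1 else posv c b.1 - 1) :=
        congrArg Fin.val hab
      have h8 : posv c a.1 = posv c b.1 := by split_ifs at h1 <;> omega
      exact Subtype.ext (cl_ext c m ha hb' h8)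
    have := hS v hvS
    omega
  · refine le_trans (shellIndex_le_nbrs _ v) ?_
    exact le_trans (noncl_nbrs_ub c m hv) (label_le c m hmax v)

include hcm hmax in
lemma shell_eq (v : Σ j : Fin n, Fin (c j)) :
    shellIndex (Gc c m) v = (v.1 : ℕ) := by
  classical
  refine le_antisymm ?_ ?_
  · by_cases hv : isCl c m v
    · have h1 : ((v.1 : Fin n) : ℕ) = (m : ℕ) := by rw [hv.1]
      rw [h1]
      exact shell_le_m c m hmax v
    · exact le_trans (shellIndex_le_nbrs _ v) (noncl_nbrs_ub c m hv)
  · apply le_shellIndex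
    refine ⟨{w | isCl c m w} ∪ {v}, ?_, Or.inr rfl⟩
    have hS : ∀ w, isCl c m w → w ∈ {w | isCl c m w} ∪ {v} := fun w hw => Or.inl hw
    intro u hu
    rcases hu with hu | hu
    · exact le_trans (label_le c m hmax v) (clique_deg c m hcm hu _ hS)
    · rw [Set.mem_singleton_iff] at hu
      subst hu
      by_cases hv : isCl c m u
      · exact le_trans (label_le c m hmax u) (clique_deg c m hcm hv _ hS)
      · exact noncl_deg c m hcm hmax hv _ hS

include hcm hmax in
lemma count (j : Fin n) : shellCount (Gc c m) (j : ℕ) = c j := by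
  classical
  have e1 : {v : Σ j : Fin n, Fin (c j) // shellIndex (Gc c m) v = (j : ℕ)} ≃
      {v : Σ j : Fin n, Fin (c j) // v.1 = j} :=
    Equiv.subtypeEquivRight fun v => by
      rw [shell_eq c m hcm hmax v, Fin.val_eq_val]
  have e2 : {v : Σ j : Fin n, Fin (c j) // v.1 = j} ≃ Fin (c j) :=
    { toFun := fun x => Fin.cast (congrArg c x.2) x.1.2
      invFun := fun i => ⟨⟨j, i⟩, rfl⟩
      left_inv := by rintro ⟨⟨j', i⟩, rfl⟩; rfl
      right_inv := fun i => rfl }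
  rw [shellCount, Nat.card_congr (e1.trans e2)]
  simp

end ShellC


/-- Let `n ≥ 1`. A vector `(n_0, …, n_{n-1})` of nonnegative integers
with `Σ n_j = n` is the shell distribution of some simple graph on `n` vertices if and
only if `n_m ≥ m + 1`, where `m` is the largest index `j` with `n_j > 0`. -/
theorem shell_distribution_realizable_iff {n : ℕ} (hn : 1 ≤ n) (c : Fin n → ℕ)
    (hsum : ∑ j, c j = n) (m : Fin n) (hm : IsGreatest {j : Fin n | 0 < c j} m) :
    (∃ G : SimpleGraph (Fin n), ∀ j : Fin n, shellCount G (j : ℕ) = c j) ↔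
      (m : ℕ) + 1 ≤ c m := by
  classical
  constructor
  · rintro ⟨G, hG⟩
    have hpos : 0 < shellCount G (m : ℕ) := by rw [hG m]; exact hm.1
    rw [shellCount] at hpos
    obtain ⟨⟨v, hv⟩⟩ := (Nat.card_pos_iff.1 hpos).1
    have hvm : v ∈ coreVerts G (m : ℕ) := by rw [← hv]; exact shellIndex_mem G v
    obtain ⟨S, hS, hvS⟩ := hvm
    have hsub : ∀ w ∈ S, shellIndex G w = (m : ℕ) := by
      intro w hw
      have h1 : (m : ℕ) ≤ shellIndex G w := le_shellIndex G ⟨S, hS, hw⟩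
      have h2 : shellIndex G w < n := by simpa using shellIndex_lt_card G w
      have h3 : 0 < c ⟨shellIndex G w, h2⟩ := by
        rw [← hG ⟨shellIndex G w, h2⟩, shellCount]
        exact Nat.card_pos_iff.2 ⟨⟨⟨w, rfl⟩⟩, inferInstance⟩
      have h4 : (⟨shellIndex G w, h2⟩ : Fin n) ≤ m := hm.2 h3
      have h5 : shellIndex G w ≤ (m : ℕ) := h4
      omega
    -- |S| ≥ m + 1
    have hinj : (m : ℕ) ≤ Nat.card ↥(S \ {v}) := by
      refine le_trans (hS v hvS) (Nat.card_le_card_of_injective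
        (fun x : {w // G.Adj v w ∧ w ∈ S} =>
          (⟨x.1, x.2.2, fun h => G.ne_of_adj x.2.1
            (Set.mem_singleton_iff.1 h).symm⟩ : ↥(S \ {v}))) ?_)
      intro a b hab
      simpa [Subtype.ext_iff] using hab
    have hncard : (m : ℕ) + 1 ≤ S.ncard := by
      rw [Nat.card_coe_set_eq] at hinj
      have := Set.ncard_diff_singleton_add_one hvS (Set.toFinite S)
      omega
    have hsubT : S ⊆ {w : Fin n | shellIndex G w = (m : ℕ)} := hsub
    have hT : c m = ({w : Fin n | shellIndex G w = (m : ℕ)} : Set (Fin n)).ncard := by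
      rw [← hG m, shellCount, ← Nat.card_coe_set_eq]
      rfl
    have := Set.ncard_le_ncard hsubT (Set.toFinite _)
    omega
  · intro hcm
    have hmax : ∀ j : Fin n, 0 < c j → j ≤ m := fun j hj => hm.2 hj
    have hcard : Fintype.card (Σ j : Fin n, Fin (c j)) = n := by
      simp [Fintype.card_sigma, hsum]
    let e : (Σ j : Fin n, Fin (c j)) ≃ Fin n := Fintype.equivFinOfCardEq hcard
    refine ⟨(ShellC.Gc c m).comap ⇑e.symm, fun j => ?_⟩
    rw [shellCount_comap e.symm (ShellC.Gc c m) (j : ℕ)]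
    exact ShellC.count c m hcm hmax j
end

section
/- Let n ≥ 2 and let g be any simple graph on n vertices. Then there exists an index j ∈ {0, 1, …, n-1} such that n_j(g) = 0; that is, every realizable shell distribution on n ≥ 2 vertices has a zero coordinate. -/
lemma zero_mem {V : Type*} (G : SimpleGraph V) (v : V) : 0 ∈ {k : ℕ | v ∈ coreVerts G k} := by
  exact ⟨Set.univ, fun _ _ => Nat.zero_le _, Set.mem_univ v⟩

lemma mem_le {V : Type*} [Fintype V] (G : SimpleGraph V) (v : V) (k : ℕ)
    (hk : k ∈ {k : ℕ | v ∈ coreVerts G k}) : k ≤ Fintype.card V - 1 := by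
  obtain ⟨S, hS, hv⟩ := hk
  have h := hS v hv
  have h1 : Nat.card {w : V // G.Adj v w ∧ w ∈ S} = Set.ncard {w | G.Adj v w ∧ w ∈ S} := by
    exact Nat.card_coe_set_eq _
  have h2 : {w | G.Adj v w ∧ w ∈ S} ⊆ {v}ᶜ := by
    intro w hw
    simp only [Set.mem_compl_iff, Set.mem_singleton_iff]
    rintro rfl
    exact G.loopless.irrefl _ hw.1
  classical
  have h3 : Set.ncard {w | G.Adj v w ∧ w ∈ S} ≤ Set.ncard (({v} : Set V)ᶜ) :=
    Set.ncard_le_ncard h2 (Set.toFinite _)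
  have h4 : Set.ncard (({v} : Set V)ᶜ) = Fintype.card V - 1 := by
    rw [Set.ncard_eq_toFinset_card', Set.toFinset_compl, Set.toFinset_singleton]
    simp [Finset.card_compl]
  omega

lemma bdd {V : Type*} [Fintype V] (G : SimpleGraph V) (v : V) :
    BddAbove {k : ℕ | v ∈ coreVerts G k} :=
  ⟨Fintype.card V - 1, fun k hk => mem_le G v k hk⟩

lemma shellIndex_le_s9 {V : Type*} [Fintype V] (G : SimpleGraph V) (v : V) :
    shellIndex G v ≤ Fintype.card V - 1 :=
  csSup_le ⟨0, zero_mem G v⟩ (fun k hk => mem_le G v k hk)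


/-- For every simple graph `g` on `n ≥ 2` vertices there is an index
`j ∈ {0, …, n-1}` with `n_j(g) = 0`: every realizable shell distribution on at least
two vertices has a zero coordinate. -/
theorem shell_distribution_has_zero_coordinate {V : Type*} [Fintype V]
    (hn : 2 ≤ Fintype.card V) (G : SimpleGraph V) :
    ∃ j : ℕ, j < Fintype.card V ∧ shellCount G j = 0 := by
  classical
  set n := Fintype.card V with hN
  by_cases hc : shellCount G (n - 1) = 0
  · exact ⟨n - 1, by omega, hc⟩
  · -- some vertex has shell index n-1
    have : Nonempty {v : V // shellIndex G v = n - 1} := by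
      unfold shellCount at hc
      exact (Nat.card_pos_iff.mp (Nat.pos_of_ne_zero hc)).1
    obtain ⟨v, hv⟩ := this
    have hmem : (n - 1) ∈ {k : ℕ | v ∈ coreVerts G k} := by
      rw [← hv]
      exact Nat.sSup_mem ⟨0, zero_mem G v⟩ (bdd G v)
    obtain ⟨S, hS, hvS⟩ := hmem
    -- S = univ
    have hSuniv : S = Set.univ := by
      have hins : insert v {w | G.Adj v w ∧ w ∈ S} ⊆ S := by
        intro w hw
        rcases hw with rfl | hw
        · exact hvS
        · exact hw.2
      have hnotmem : v ∉ {w | G.Adj v w ∧ w ∈ S} := fun h => G.loopless.irrefl v h.1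
      have hcard : n - 1 ≤ Set.ncard {w | G.Adj v w ∧ w ∈ S} := by
        have h0 := hS v hvS
        have h1 : Nat.card {w : V // G.Adj v w ∧ w ∈ S} =
            Set.ncard {w | G.Adj v w ∧ w ∈ S} := Nat.card_coe_set_eq _
        omega
      have hins_card : Set.ncard (insert v {w | G.Adj v w ∧ w ∈ S}) =
          Set.ncard {w | G.Adj v w ∧ w ∈ S} + 1 :=
        Set.ncard_insert_of_notMem hnotmem (Set.toFinite _)
      have hScard : n ≤ Set.ncard S := by
        have := Set.ncard_le_ncard hins (Set.toFinite S)
        omega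
      have huniv : Set.ncard (Set.univ : Set V) ≤ Set.ncard S := by
        rwa [Set.ncard_univ, Nat.card_eq_fintype_card]
      exact Set.eq_of_subset_of_ncard_le (Set.subset_univ S) huniv
    have hall : ∀ u : V, shellIndex G u = n - 1 := by
      intro u
      have hu : (n - 1) ∈ {k : ℕ | u ∈ coreVerts G k} :=
        ⟨S, hS, hSuniv ▸ Set.mem_univ u⟩
      exact le_antisymm (shellIndex_le_s9 G u) (le_csSup (bdd G u) hu)
    refine ⟨0, by omega, ?_⟩
    have : IsEmpty {u : V // shellIndex G u = 0} := by
      constructor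
      rintro ⟨u, hu⟩
      have := hall u
      omega
    simp [shellCount, Nat.card_of_isEmpty]
end
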